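/- Let r ≥ 1 and let (v_1,…,v_r) be a system of linear functionals on ℂ[x]. Suppose that for every 0 ≤ j ≤ r the moment matrix M^{[j]} of the system V^{[j]} := (v_{j+1},…,v_r, x·v_1,…,x·v_j) admits a Gauss–Borel factorisation M^{[j]} = A^{[j]} B^{[j]}. Define α_{(r+1)n} := B^{[r]}_{n,n} / B^{[0]}_{n,n} and α_{(r+1)n+i} := B^{[i−1]}_{n+1,n+1} / B^{[i]}_{n,n} for all n ∈ ℕ and 1 ≤ i ≤ r, and let L_1,…,L_r, U be the bidiagonal matrices built from the sequence (α_n). Then: (a) α_{(r+1)n} = A^{[0]}_{n+1,n} − A^{[r]}_{n,n−1} (with the convention A^{[r]}_{0,−1} := 0) and α_{(r+1)n+i} = A^{[i]}_{n+1,n} − A^{[i−1]}_{n+1,n} for 1 ≤ i ≤ r; (b) for every 0 ≤ j ≤ r, the Hessenberg matrix H^{[j]} determined by A^{[j]} H^{[j]} = Λ A^{[j]} admits the bidiagonal factorisation H^{[j]} = L_{j+1} ⋯ L_r · U · L_1 ⋯ L_j (entrywise product); in particular H^{[0]} = L_1 ⋯ L_r U. -/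

import Mathlib

open Polynomial Finset

noncomputable section

/-- A linear functional on `ℂ[x]`. -/
abbrev LF := Polynomial ℂ →ₗ[ℂ] ℂ

/-- `x·u` is the functional `p ↦ ⟨u, x p⟩`. -/
def xMul (u : LF) : LF := u.comp (LinearMap.mulLeft ℂ (Polynomial.X : Polynomial ℂ))

/-- The moment matrix of a system of `r` linear functionals (0-indexed). -/
def momentMatrix (r : ℕ) (v : ℕ → LF) (n ℓ : ℕ) : ℂ :=
  v (ℓ % r) (Polynomial.X ^ (ℓ / r + n))

/-- The Darboux-transformed system `V^{[j]} = (v_{j+1},…,v_r, x·v_1,…,x·v_j)`. -/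
def Vsys (r j : ℕ) (v : ℕ → LF) : ℕ → LF :=
  fun i => if j + i < r then v (j + i) else xMul (v (j + i - r))

/-- A Gauss–Borel factorisation `M = A·B` of the moment matrix. -/
structure GaussBorel (r : ℕ) (v : ℕ → LF) (A B : ℕ → ℕ → ℂ) : Prop where
  A_diag : ∀ n, A n n = 1
  A_upper : ∀ n ℓ, n < ℓ → A n ℓ = 0
  B_lower : ∀ n ℓ, ℓ < n → B n ℓ = 0
  B_diag : ∀ n, B n n ≠ 0
  factor : ∀ n ℓ, momentMatrix r v n ℓ = ∑ k ∈ Finset.range (n + 1), A n k * B k ℓ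

/-- The upper-bidiagonal matrix `U`: `U_{n,n} = α_{(r+1)n}`, `U_{n,n+1} = 1`. -/
def Umat (r : ℕ) (α : ℕ → ℂ) : ℕ → ℕ → ℂ := fun n ℓ =>
  if ℓ = n then α ((r + 1) * n) else if ℓ = n + 1 then 1 else 0

/-- The lower-bidiagonal matrix `L_k`: `(L_k)_{n,n} = 1`, `(L_k)_{n+1,n} = α_{(r+1)n+k}`. -/
def Lmat (r k : ℕ) (α : ℕ → ℂ) : ℕ → ℕ → ℂ := fun n ℓ =>
  if ℓ = n then 1 else if n = ℓ + 1 then α ((r + 1) * ℓ + k) else 0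

/-- Entrywise product of two infinite matrices whose left factor has row `n`
supported in columns `< n+2` (true for all `L_k` and `U`); the sum is finite. -/
def bidMul (X Y : ℕ → ℕ → ℂ) : ℕ → ℕ → ℂ := fun n ℓ =>
  ∑ k ∈ Finset.range (n + 2), X n k * Y k ℓ

/-- Product of a list of such matrices. -/
def listProd : List (ℕ → ℕ → ℂ) → ℕ → ℕ → ℂ
  | [] => fun n ℓ => if n = ℓ then 1 else 0
  | X :: rest => bidMul X (listProd rest)

/-- The list of factors `L_{j+1}, …, L_r, U, L_1, …, L_j`. -/
def factorList (r j : ℕ) (α : ℕ → ℂ) : List (ℕ → ℕ → ℂ) :=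
  ((List.range' (j + 1) (r - j)).map fun k => Lmat r k α) ++ [Umat r α]
    ++ ((List.range' 1 j).map fun k => Lmat r k α)

/-- The coefficients `α_{(r+1)n} = B^{[r]}_{n,n}/B^{[0]}_{n,n}` and
`α_{(r+1)n+i} = B^{[i-1]}_{n+1,n+1}/B^{[i]}_{n,n}` for `1 ≤ i ≤ r`. -/
def alphaGB (r : ℕ) (B : ℕ → ℕ → ℕ → ℂ) (m : ℕ) : ℂ :=
  if m % (r + 1) = 0 then
    B r (m / (r + 1)) (m / (r + 1)) / B 0 (m / (r + 1)) (m / (r + 1))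
  else
    B (m % (r + 1) - 1) (m / (r + 1) + 1) (m / (r + 1) + 1)
      / B (m % (r + 1)) (m / (r + 1)) (m / (r + 1))


/-! ### Auxiliary machinery -/

/-- Entrywise inverse of a unit lower triangular matrix. -/
def Ainv (A : ℕ → ℕ → ℂ) : ℕ → ℕ → ℂ
  | n, ℓ =>
    if n = ℓ then 1
    else if _h : ℓ < n then
      -∑ k ∈ (Finset.Ico ℓ n).attach, A n k.1 * Ainv A k.1 ℓ
    else 0
termination_by n _ => n
decreasing_by exact (Finset.mem_Ico.mp k.2).2

lemma Ainv_def (A : ℕ → ℕ → ℂ) (n ℓ : ℕ) : Ainv A n ℓ =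
    if n = ℓ then 1
    else if ℓ < n then
      -∑ k ∈ (Finset.Ico ℓ n).attach, A n k.1 * Ainv A k.1 ℓ
    else 0 := by
  rw [Ainv]; split <;> simp

lemma Ainv_diag (A : ℕ → ℕ → ℂ) (n : ℕ) : Ainv A n n = 1 := by
  rw [Ainv_def]; simp

lemma Ainv_upper (A : ℕ → ℕ → ℂ) {n ℓ : ℕ} (h : n < ℓ) : Ainv A n ℓ = 0 := by
  rw [Ainv_def, if_neg (by omega), if_neg (by omega)]

lemma Ainv_lt (A : ℕ → ℕ → ℂ) {n ℓ : ℕ} (h : ℓ < n) :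
    Ainv A n ℓ = -∑ k ∈ Finset.Ico ℓ n, A n k * Ainv A k ℓ := by
  rw [Ainv_def, if_neg (by omega), if_pos h,
    ← Finset.sum_attach (Finset.Ico ℓ n) (fun k => A n k * Ainv A k ℓ)]

lemma mul_Ainv {A : ℕ → ℕ → ℂ} (hd : ∀ n, A n n = 1) (n m : ℕ) :
    ∑ k ∈ range (n + 1), A n k * Ainv A k m = if n = m then 1 else 0 := by
  rcases lt_trichotomy n m with h | h | h
  · rw [if_neg (by omega)]
    exact Finset.sum_eq_zero fun k hk => by
      rw [Ainv_upper A (by simp at hk; omega), mul_zero]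
  · subst h
    rw [if_pos rfl, Finset.sum_range_succ, Ainv_diag, hd, mul_one,
      Finset.sum_eq_zero, zero_add]
    intro k hk
    rw [Ainv_upper A (by simp at hk; omega), mul_zero]
  · rw [if_neg (by omega), Finset.sum_range_succ, hd, one_mul, Ainv_lt A h]
    have : ∑ k ∈ range n, A n k * Ainv A k m = ∑ k ∈ Finset.Ico m n, A n k * Ainv A k m := by
      rw [Finset.range_eq_Ico, ← Finset.sum_Ico_consecutive _ (Nat.zero_le m) (le_of_lt h),
        Finset.sum_eq_zero (fun k hk => by
          rw [Ainv_upper A (by simp at hk; omega), mul_zero]), zero_add]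
    rw [this]; ring

lemma cancel {A X Y : ℕ → ℕ → ℂ} (hd : ∀ n, A n n = 1)
    (h : ∀ n ℓ, ∑ k ∈ range (n + 1), A n k * X k ℓ = ∑ k ∈ range (n + 1), A n k * Y k ℓ) :
    ∀ n ℓ, X n ℓ = Y n ℓ := by
  intro n
  induction n using Nat.strong_induction_on with
  | _ n ih =>
    intro ℓ
    have h' := h n ℓ
    rw [Finset.sum_range_succ, Finset.sum_range_succ,
      Finset.sum_congr rfl (fun k hk => by rw [ih k (by simp at hk; omega) ℓ])] at h'
    have := add_left_cancel h'
    rwa [hd, one_mul, one_mul] at this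

lemma solveLow {e : ℕ → ℂ} {B' : ℕ → ℕ → ℂ} (hBl : ∀ n ℓ, ℓ < n → B' n ℓ = 0)
    (hBd : ∀ n, B' n n ≠ 0) {N c : ℕ}
    (h : ∀ ℓ, ℓ < c → ∑ k ∈ range N, e k * B' k ℓ = 0) :
    ∀ m, m < c → m < N → e m = 0 := by
  intro m
  induction m using Nat.strong_induction_on with
  | _ m ih =>
    intro hmc hmN
    have h' := h m hmc
    rw [Finset.sum_eq_single m (fun k hk hkm => by
      rcases lt_or_gt_of_ne hkm with h1 | h1
      · rw [ih k h1 (by omega) (by simp at hk; omega), zero_mul]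
      · rw [hBl k m h1, mul_zero]) (fun hm => absurd (Finset.mem_range.mpr hmN) hm)] at h'
    exact (mul_eq_zero.mp h').resolve_right (hBd m)

lemma mul_swap' {A S : ℕ → ℕ → ℂ} {c : ℕ} (hS : ∀ k m, k + c ≤ m → S k m = 0)
    (W : ℕ → ℂ) (n : ℕ) :
    ∑ k ∈ range (n + 1), A n k * ∑ m ∈ range (k + c), S k m * W m
      = ∑ m ∈ range (n + c), (∑ k ∈ range (n + 1), A n k * S k m) * W m := by
  have h1 : ∀ k ∈ range (n + 1), A n k * ∑ m ∈ range (k + c), S k m * W m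
      = ∑ m ∈ range (n + c), A n k * (S k m * W m) := by
    intro k hk
    rw [Finset.mul_sum]
    apply Finset.sum_subset (Finset.range_subset_range.2 (by simp at hk; omega))
    intro m _ hm
    rw [hS k m (by simp at hm; omega), zero_mul, mul_zero]
  rw [Finset.sum_congr rfl h1, Finset.sum_comm]
  exact Finset.sum_congr rfl fun m _ => by
    rw [Finset.sum_mul]; exact Finset.sum_congr rfl fun k _ => by ring

lemma Ainv_apply {A : ℕ → ℕ → ℂ} (hd : ∀ n, A n n = 1) (W : ℕ → ℂ) (n : ℕ) :
    ∑ k ∈ range (n + 1), A n k * ∑ m ∈ range (k + 1), Ainv A k m * W m = W n := by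
  rw [mul_swap' (fun k m h => Ainv_upper A (by omega)) W n,
    Finset.sum_congr rfl (fun m _ => by rw [mul_Ainv hd])]
  simp

/-- If `A'B' = AB(shifted col by 1)`, then `A' = A·L` where `L` is lower bidiagonal
with subdiagonal entries `B_{ℓ+1,ℓ+1}/B'_{ℓ,ℓ}`. -/
lemma conn {A B A' B' : ℕ → ℕ → ℂ}
    (hAd : ∀ n, A n n = 1) (hAu : ∀ n ℓ, n < ℓ → A n ℓ = 0)
    (hBl : ∀ n ℓ, ℓ < n → B n ℓ = 0)
    (hA'd : ∀ n, A' n n = 1) (hA'u : ∀ n ℓ, n < ℓ → A' n ℓ = 0)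
    (hB'l : ∀ n ℓ, ℓ < n → B' n ℓ = 0) (hB'd : ∀ n, B' n n ≠ 0)
    (heq : ∀ n ℓ, ∑ k ∈ range (n + 1), A' n k * B' k ℓ
             = ∑ k ∈ range (n + 1), A n k * B k (ℓ + 1)) :
    ∀ n ℓ, A' n ℓ = A n ℓ + B (ℓ + 1) (ℓ + 1) / B' ℓ ℓ * A n (ℓ + 1) := by
  set E : ℕ → ℕ → ℂ := fun n ℓ => ∑ k ∈ range (n + 1), Ainv A n k * A' k ℓ with hE
  have hAE : ∀ n ℓ, ∑ k ∈ range (n + 1), A n k * E k ℓ = A' n ℓ := fun n ℓ =>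
    Ainv_apply hAd (fun m => A' m ℓ) n
  have hElow : ∀ n ℓ, n < ℓ → E n ℓ = 0 := by
    intro n ℓ h
    exact Finset.sum_eq_zero fun k hk => by
      rw [hA'u k ℓ (by simp at hk; omega), mul_zero]
  have hstar : ∀ n ℓ, ∑ k ∈ range (n + 1), E n k * B' k ℓ = B n (ℓ + 1) := by
    apply cancel hAd
    intro n ℓ
    rw [mul_swap' (S := E) (c := 1) (fun k m h => hElow k m (by omega)) (fun m => B' m ℓ) n,
      Finset.sum_congr rfl (fun m _ => by rw [hAE])]
    exact heq n ℓ
  have hE0 : ∀ n m, m + 1 < n → E n m = 0 := by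
    intro n m hm
    exact solveLow hB'l hB'd (c := n - 1) (N := n + 1)
      (fun ℓ hℓ => by rw [hstar n ℓ]; exact hBl n (ℓ + 1) (by omega)) m (by omega) (by omega)
  have hEsub : ∀ n, E (n + 1) n = B (n + 1) (n + 1) / B' n n := by
    intro n
    have h' := hstar (n + 1) n
    rw [Finset.sum_eq_single n (fun k hk hkn => by
      rcases lt_or_gt_of_ne hkn with h1 | h1
      · rw [hE0 (n + 1) k (by omega), zero_mul]
      · rw [hB'l k n h1, mul_zero]) (fun hn => absurd (Finset.mem_range.mpr (by omega)) hn)] at h'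
    field_simp [hB'd n]
    linear_combination h'
  have hEdiag : ∀ n, E n n = 1 := by
    intro n
    show ∑ k ∈ range (n + 1), Ainv A n k * A' k n = 1
    rw [Finset.sum_eq_single n (fun k hk hkn => by
      rw [hA'u k n (by simp at hk; omega), mul_zero])
      (fun hn => absurd (Finset.mem_range.mpr (by omega)) hn), Ainv_diag]
    simp [hA'd]
  intro n ℓ
  rw [← hAE n ℓ]
  have hterm : ∀ k, A n k * E k ℓ
      = (if k = ℓ then A n ℓ else 0)
        + (if k = ℓ + 1 then B (ℓ + 1) (ℓ + 1) / B' ℓ ℓ * A n (ℓ + 1) else 0) := by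
    intro k
    rcases eq_or_ne k ℓ with rfl | h1
    · rw [if_pos rfl, if_neg (by omega), hEdiag]; ring
    rcases eq_or_ne k (ℓ + 1) with rfl | h2
    · rw [if_neg h1, if_pos rfl, hEsub]; ring
    · rcases lt_or_gt_of_ne h1 with h3 | h3
      · rw [hElow k ℓ h3, if_neg h1, if_neg h2]; ring
      · rw [hE0 k ℓ (by omega), if_neg h1, if_neg h2]; ring
  rw [Finset.sum_congr rfl (fun k _ => hterm k), Finset.sum_add_distrib,
    Finset.sum_ite_eq' (range (n + 1)) ℓ (fun _ => A n ℓ),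
    Finset.sum_ite_eq' (range (n + 1)) (ℓ + 1)
      (fun _ => B (ℓ + 1) (ℓ + 1) / B' ℓ ℓ * A n (ℓ + 1))]
  simp only [Finset.mem_range]
  split_ifs with h1 h2 h2
  · rfl
  · rw [hAu n (ℓ + 1) (by omega), mul_zero]
  · omega
  · rw [hAu n ℓ (by omega), hAu n (ℓ + 1) (by omega), mul_zero]

/-- If `ArBr = (ΛA0)B0`, then `ΛA0 = Ar·U` with `U` upper bidiagonal. -/
lemma connU {Ar Br A0 B0 : ℕ → ℕ → ℂ}
    (hArd : ∀ n, Ar n n = 1) (hAru : ∀ n ℓ, n < ℓ → Ar n ℓ = 0)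
    (hBrl : ∀ n ℓ, ℓ < n → Br n ℓ = 0)
    (hA0d : ∀ n, A0 n n = 1) (hA0u : ∀ n ℓ, n < ℓ → A0 n ℓ = 0)
    (hB0l : ∀ n ℓ, ℓ < n → B0 n ℓ = 0) (hB0d : ∀ n, B0 n n ≠ 0)
    (heq : ∀ n ℓ, ∑ k ∈ range (n + 1), Ar n k * Br k ℓ
             = ∑ k ∈ range (n + 2), A0 (n + 1) k * B0 k ℓ) :
    ∀ n ℓ, A0 (n + 1) ℓ = Br ℓ ℓ / B0 ℓ ℓ * Ar n ℓ
        + (if ℓ = 0 then 0 else Ar n (ℓ - 1)) := by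
  set S : ℕ → ℕ → ℂ := fun n ℓ => ∑ k ∈ range (n + 1), Ainv Ar n k * A0 (k + 1) ℓ with hS
  have hAS : ∀ n ℓ, ∑ k ∈ range (n + 1), Ar n k * S k ℓ = A0 (n + 1) ℓ := fun n ℓ =>
    Ainv_apply hArd (fun m => A0 (m + 1) ℓ) n
  have hSupp : ∀ k m, k + 2 ≤ m → S k m = 0 := by
    intro k m h
    exact Finset.sum_eq_zero fun i hi => by
      rw [hA0u (i + 1) m (by simp at hi; omega), mul_zero]
  have hstar2 : ∀ n ℓ, ∑ m ∈ range (n + 2), S n m * B0 m ℓ = Br n ℓ := by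
    apply cancel hArd
    intro n ℓ
    rw [mul_swap' (S := S) (c := 2) hSupp (fun m => B0 m ℓ) n,
      Finset.sum_congr rfl (fun m _ => by rw [hAS])]
    exact (heq n ℓ).symm
  have hS0 : ∀ n m, m < n → S n m = 0 := by
    intro n m hm
    exact solveLow hB0l hB0d (c := n) (N := n + 2)
      (fun ℓ hℓ => by rw [hstar2 n ℓ]; exact hBrl n ℓ hℓ) m hm (by omega)
  have hSdiag : ∀ n, S n n = Br n n / B0 n n := by
    intro n
    have h' := hstar2 n n
    rw [Finset.sum_eq_single n (fun k hk hkn => by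
      rcases lt_or_gt_of_ne hkn with h1 | h1
      · rw [hS0 n k h1, zero_mul]
      · rw [hB0l k n h1, mul_zero]) (fun hn => absurd (Finset.mem_range.mpr (by omega)) hn)] at h'
    field_simp [hB0d n]
    linear_combination h'
  have hSsup : ∀ n, S n (n + 1) = 1 := by
    intro n
    show ∑ k ∈ range (n + 1), Ainv Ar n k * A0 (k + 1) (n + 1) = 1
    rw [Finset.sum_eq_single n (fun k hk hkn => by
      rw [hA0u (k + 1) (n + 1) (by simp at hk; omega), mul_zero])
      (fun hn => absurd (Finset.mem_range.mpr (by omega)) hn), Ainv_diag]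
    simp [hA0d]
  intro n ℓ
  rw [← hAS n ℓ]
  rcases Nat.eq_zero_or_pos ℓ with rfl | hℓ
  · rw [if_pos rfl, Finset.sum_eq_single 0 (fun k hk hk0 => by
      rw [hS0 k 0 (by omega), mul_zero])
      (fun h0 => absurd (Finset.mem_range.mpr (by omega)) h0), hSdiag]
    ring
  · rw [if_neg (by omega)]
    obtain ⟨m, rfl⟩ : ∃ m, ℓ = m + 1 := ⟨ℓ - 1, by omega⟩
    have hterm : ∀ k, Ar n k * S k (m + 1)
        = (if k = m + 1 then Br (m + 1) (m + 1) / B0 (m + 1) (m + 1) * Ar n (m + 1) else 0)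
          + (if k = m then Ar n m else 0) := by
      intro k
      rcases eq_or_ne k (m + 1) with rfl | h1
      · rw [if_pos rfl, if_neg (by omega), hSdiag]; ring
      rcases eq_or_ne k m with rfl | h2
      · rw [if_neg h1, if_pos rfl, hSsup]; ring
      · rcases lt_or_gt_of_ne h2 with h3 | h3
        · rw [hSupp k (m + 1) (by omega), if_neg h1, if_neg h2, mul_zero]; ring
        · rw [hS0 k (m + 1) (by omega), if_neg h1, if_neg h2, mul_zero]; ring
    rw [Finset.sum_congr rfl (fun k _ => hterm k), Finset.sum_add_distrib,
      Finset.sum_ite_eq' (range (n + 1)) (m + 1)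
        (fun _ => Br (m + 1) (m + 1) / B0 (m + 1) (m + 1) * Ar n (m + 1)),
      Finset.sum_ite_eq' (range (n + 1)) m (fun _ => Ar n m)]
    simp only [Finset.mem_range, Nat.add_sub_cancel]
    split_ifs with h1 h2 h2
    · rfl
    · omega
    · rw [hAru n (m + 1) (by omega), mul_zero]
    · rw [hAru n (m + 1) (by omega), hAru n m (by omega), mul_zero]

lemma Mshift {r : ℕ} (v : ℕ → LF) {j : ℕ} (hj : j < r) (n ℓ : ℕ) :
    momentMatrix r (Vsys r (j + 1) v) n ℓ = momentMatrix r (Vsys r j v) n (ℓ + 1) := by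
  have hr : 0 < r := by omega
  have hs : ℓ % r < r := Nat.mod_lt _ hr
  have hdm : r * (ℓ / r) + ℓ % r = ℓ := Nat.div_add_mod ℓ r
  unfold momentMatrix Vsys
  rcases eq_or_lt_of_le (Nat.succ_le_of_lt hs) with he | hlt
  · have h1 : (ℓ + 1) % r = 0 := by
      conv_lhs => rw [← hdm]
      rw [show r * (ℓ / r) + ℓ % r + 1 = r * (ℓ / r) + (ℓ % r + 1) by omega,
        Nat.mul_add_mod, show ℓ % r + 1 = r from he, Nat.mod_self]
    have h2 : (ℓ + 1) / r = ℓ / r + 1 := by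
      conv_lhs => rw [← hdm]
      rw [show r * (ℓ / r) + ℓ % r + 1 = r * (ℓ / r) + (ℓ % r + 1) by omega,
        Nat.mul_add_div hr, show ℓ % r + 1 = r from he, Nat.div_self hr]
    rw [h1, h2, if_neg (by omega), if_pos (by omega),
      show j + 1 + ℓ % r - r = j by omega, show j + 0 = j from rfl]
    show (v j) ((Polynomial.X : Polynomial ℂ) * X ^ (ℓ / r + n)) = _
    congr 1
    rw [show ℓ / r + 1 + n = (ℓ / r + n) + 1 by omega, pow_succ]
    ring
  · have h1 : (ℓ + 1) % r = ℓ % r + 1 := by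
      conv_lhs => rw [← hdm]
      rw [show r * (ℓ / r) + ℓ % r + 1 = r * (ℓ / r) + (ℓ % r + 1) by omega,
        Nat.mul_add_mod, Nat.mod_eq_of_lt hlt]
    have h2 : (ℓ + 1) / r = ℓ / r := by
      conv_lhs => rw [← hdm]
      rw [show r * (ℓ / r) + ℓ % r + 1 = r * (ℓ / r) + (ℓ % r + 1) by omega,
        Nat.mul_add_div hr, Nat.div_eq_of_lt hlt, add_zero]
    rw [h1, h2, show j + (ℓ % r + 1) = j + 1 + ℓ % r by omega]

lemma Mshift_r {r : ℕ} (hr : 1 ≤ r) (v : ℕ → LF) (n ℓ : ℕ) :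
    momentMatrix r (Vsys r r v) n ℓ = momentMatrix r (Vsys r 0 v) (n + 1) ℓ := by
  unfold momentMatrix Vsys
  have hm : ℓ % r < r := Nat.mod_lt _ (by omega)
  rw [if_neg (by omega), if_pos (show 0 + ℓ % r < r by omega),
    show r + ℓ % r - r = ℓ % r by omega, show 0 + ℓ % r = ℓ % r by omega]
  show (v (ℓ % r)) ((Polynomial.X : Polynomial ℂ) * X ^ (ℓ / r + n)) = _
  congr 1
  rw [show ℓ / r + (n + 1) = (ℓ / r + n) + 1 by omega, pow_succ]
  ring

lemma Lmat_supp (r c : ℕ) (α : ℕ → ℂ) {n ℓ : ℕ} (h : n < ℓ) : Lmat r c α n ℓ = 0 := by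
  unfold Lmat; rw [if_neg (by omega), if_neg (by omega)]

lemma Umat_supp (r : ℕ) (α : ℕ → ℂ) {n ℓ : ℕ} (h : n + 1 < ℓ) : Umat r α n ℓ = 0 := by
  unfold Umat; rw [if_neg (by omega), if_neg (by omega)]

lemma bidMul_row_congr {X X' P : ℕ → ℕ → ℂ} {n : ℕ} (h : ∀ k, X n k = X' n k) (ℓ : ℕ) :
    bidMul X P n ℓ = bidMul X' P n ℓ :=
  Finset.sum_congr rfl fun k _ => by rw [h k]

lemma bidMul_L {r c : ℕ} {α : ℕ → ℂ} {X : ℕ → ℕ → ℂ} (hX : ∀ n ℓ, n + 1 < ℓ → X n ℓ = 0)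
    (n ℓ : ℕ) : bidMul X (Lmat r c α) n ℓ = X n ℓ + α ((r + 1) * ℓ + c) * X n (ℓ + 1) := by
  unfold bidMul
  have hterm : ∀ k, X n k * Lmat r c α k ℓ
      = (if k = ℓ then X n ℓ else 0)
        + (if k = ℓ + 1 then α ((r + 1) * ℓ + c) * X n (ℓ + 1) else 0) := by
    intro k
    unfold Lmat
    rcases eq_or_ne k ℓ with rfl | h1
    · rw [if_pos rfl, if_pos rfl, if_neg (by omega)]; ring
    rcases eq_or_ne k (ℓ + 1) with rfl | h2
    · rw [if_neg (by omega), if_pos rfl, if_neg (by omega), if_pos rfl]; ring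
    · rw [if_neg (by omega), if_neg (by omega), if_neg h1, if_neg h2, mul_zero, add_zero]
  rw [Finset.sum_congr rfl (fun k _ => hterm k), Finset.sum_add_distrib,
    Finset.sum_ite_eq' (range (n + 2)) ℓ (fun _ => X n ℓ),
    Finset.sum_ite_eq' (range (n + 2)) (ℓ + 1) (fun _ => α ((r + 1) * ℓ + c) * X n (ℓ + 1))]
  simp only [Finset.mem_range]
  split_ifs with h1 h2 h2
  · rfl
  · rw [hX n (ℓ + 1) (by omega), mul_zero]
  · omega
  · rw [hX n ℓ (by omega), hX n (ℓ + 1) (by omega), mul_zero]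

lemma bidMul_U {r : ℕ} {α : ℕ → ℂ} {X : ℕ → ℕ → ℂ} (hX : ∀ n ℓ, n < ℓ → X n ℓ = 0)
    (n ℓ : ℕ) : bidMul X (Umat r α) n ℓ
      = α ((r + 1) * ℓ) * X n ℓ + (if ℓ = 0 then 0 else X n (ℓ - 1)) := by
  unfold bidMul
  rcases Nat.eq_zero_or_pos ℓ with rfl | hℓ
  · rw [if_pos rfl, add_zero, Finset.sum_eq_single 0 (fun k hk hk0 => by
      unfold Umat
      rw [if_neg (Ne.symm hk0), if_neg (by omega), mul_zero])
      (fun h0 => absurd (Finset.mem_range.mpr (by omega)) h0)]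
    unfold Umat
    rw [if_pos rfl]; ring
  · rw [if_neg (by omega)]
    obtain ⟨m, rfl⟩ : ∃ m, ℓ = m + 1 := ⟨ℓ - 1, by omega⟩
    have hterm : ∀ k, X n k * Umat r α k (m + 1)
        = (if k = m + 1 then α ((r + 1) * (m + 1)) * X n (m + 1) else 0)
          + (if k = m then X n m else 0) := by
      intro k
      unfold Umat
      rcases eq_or_ne k (m + 1) with rfl | h1
      · rw [if_pos rfl, if_pos rfl, if_neg (by omega)]; ring
      rcases eq_or_ne k m with rfl | h2
      · rw [if_neg (by omega), if_pos rfl, if_neg h1, if_pos rfl]; ring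
      · rw [if_neg (by omega), if_neg (by omega), if_neg h1, if_neg h2, mul_zero, add_zero]
    rw [Finset.sum_congr rfl (fun k _ => hterm k), Finset.sum_add_distrib,
      Finset.sum_ite_eq' (range (n + 2)) (m + 1)
        (fun _ => α ((r + 1) * (m + 1)) * X n (m + 1)),
      Finset.sum_ite_eq' (range (n + 2)) m (fun _ => X n m)]
    simp only [Finset.mem_range, Nat.add_sub_cancel]
    split_ifs with h1 h2 h2
    · rfl
    · omega
    · rw [hX n (m + 1) (by omega), mul_zero]
    · rw [hX n (m + 1) (by omega), hX n m (by omega), mul_zero]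

lemma listProd_nil {X : ℕ → ℕ → ℂ} (hX : ∀ n ℓ, n + 1 < ℓ → X n ℓ = 0) (n ℓ : ℕ) :
    bidMul X (listProd []) n ℓ = X n ℓ := by
  unfold bidMul listProd
  rw [Finset.sum_congr rfl (fun k _ => show X n k * (if k = ℓ then 1 else 0)
      = if k = ℓ then X n ℓ else 0 by split_ifs with h <;> simp [h]),
    Finset.sum_ite_eq' (range (n + 2)) ℓ (fun _ => X n ℓ)]
  simp only [Finset.mem_range]
  split_ifs with h1
  · rfl
  · rw [hX n ℓ (by omega)]

lemma bid_assoc {X f : ℕ → ℕ → ℂ} (hf : ∀ n ℓ, n + 1 < ℓ → f n ℓ = 0)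
    (hXf : ∀ n, X n (n + 1) * f (n + 1) (n + 2) = 0) (P : ℕ → ℕ → ℂ) (n ℓ : ℕ) :
    bidMul X (bidMul f P) n ℓ = bidMul (bidMul X f) P n ℓ := by
  show ∑ k ∈ range (n + 1 + 1), X n k * ∑ m ∈ range (k + 2), f k m * P m ℓ = _
  rw [mul_swap' (A := fun _ k => X n k) (c := 2) (fun k m h => hf k m (by omega))
    (fun m => P m ℓ) (n + 1)]
  rw [show n + 1 + 2 = (n + 2) + 1 by omega, Finset.sum_range_succ]
  have hzero : ∑ k ∈ range (n + 1 + 1), X n k * f k (n + 2) = 0 := by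
    rw [Finset.sum_eq_single (n + 1) (fun k hk hkn => by
      rw [hf k (n + 2) (by simp at hk; omega), mul_zero])
      (fun hn => absurd (Finset.mem_range.mpr (by omega)) hn)]
    exact hXf n
  rw [hzero, zero_mul, add_zero]
  rfl

theorem stmt4 (r : ℕ) (hr : 1 ≤ r) (v : ℕ → LF) (A B : ℕ → ℕ → ℕ → ℂ)
    (hGB : ∀ j, j ≤ r → GaussBorel r (Vsys r j v) (A j) (B j)) :
    -- (a) formulas for the `α`'s via the `A^{[j]}`'s
    ((∀ n, alphaGB r B ((r + 1) * n)
        = A 0 (n + 1) n - (if n = 0 then 0 else A r n (n - 1))) ∧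
     (∀ n i, 1 ≤ i → i ≤ r →
        alphaGB r B ((r + 1) * n + i) = A i (n + 1) n - A (i - 1) (n + 1) n)) ∧
    -- (b) the Hessenberg matrix `H^{[j]}` (determined by `A^{[j]} H^{[j]} = Λ A^{[j]}`)
    -- factorises as `L_{j+1} ⋯ L_r U L_1 ⋯ L_j`
    (∀ j, j ≤ r → ∀ H : ℕ → ℕ → ℂ,
      (∀ n ℓ, ∑ k ∈ Finset.range (n + 1), A j n k * H k ℓ = A j (n + 1) ℓ) →
      ∀ n ℓ, H n ℓ = listProd (factorList r j (alphaGB r B)) n ℓ) := by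
  have hr1 : 0 < r + 1 := by omega
  set α := alphaGB r B with hαdef
  have hαn : ∀ n, α ((r + 1) * n) = B r n n / B 0 n n := by
    intro n
    rw [hαdef]
    unfold alphaGB
    rw [Nat.mul_mod_right, if_pos rfl, Nat.mul_div_cancel_left _ hr1]
  have hαi : ∀ n i, 1 ≤ i → i ≤ r →
      α ((r + 1) * n + i) = B (i - 1) (n + 1) (n + 1) / B i n n := by
    intro n i h1 h2
    rw [hαdef]
    unfold alphaGB
    have hm : ((r + 1) * n + i) % (r + 1) = i := by
      rw [Nat.mul_add_mod, Nat.mod_eq_of_lt (by omega)]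
    have hd : ((r + 1) * n + i) / (r + 1) = n := by
      rw [Nat.mul_add_div hr1, Nat.div_eq_of_lt (by omega), add_zero]
    rw [hm, hd, if_neg (by omega)]
  have hF1 : ∀ i, i < r → ∀ n ℓ,
      A (i + 1) n ℓ = A i n ℓ + α ((r + 1) * ℓ + (i + 1)) * A i n (ℓ + 1) := by
    intro i hi
    have h := conn (hGB i (by omega)).A_diag (hGB i (by omega)).A_upper
      (hGB i (by omega)).B_lower (hGB (i + 1) (by omega)).A_diag
      (hGB (i + 1) (by omega)).A_upper (hGB (i + 1) (by omega)).B_lower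
      (hGB (i + 1) (by omega)).B_diag
      (fun n ℓ => by
        rw [← (hGB (i + 1) (by omega)).factor, ← (hGB i (by omega)).factor]
        exact Mshift v hi n ℓ)
    intro n ℓ
    rw [h n ℓ, hαi ℓ (i + 1) (by omega) (by omega), Nat.add_sub_cancel]
  have hF2 : ∀ n ℓ, A 0 (n + 1) ℓ
      = α ((r + 1) * ℓ) * A r n ℓ + (if ℓ = 0 then 0 else A r n (ℓ - 1)) := by
    have h := connU (hGB r le_rfl).A_diag (hGB r le_rfl).A_upper
      (hGB r le_rfl).B_lower (hGB 0 (by omega)).A_diag (hGB 0 (by omega)).A_upper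
      (hGB 0 (by omega)).B_lower (hGB 0 (by omega)).B_diag
      (fun n ℓ => by
        rw [← (hGB r le_rfl).factor]
        rw [Mshift_r hr v n ℓ]
        exact (hGB 0 (by omega)).factor (n + 1) ℓ)
    intro n ℓ
    rw [h n ℓ, hαn ℓ]
  refine ⟨⟨?_, ?_⟩, ?_⟩
  · -- (a), diagonal coefficients
    intro n
    have h := hF2 n n
    rw [(hGB r le_rfl).A_diag n, mul_one] at h
    rw [h]
    ring
  · -- (a), subdiagonal coefficients
    intro n i h1 h2
    obtain ⟨i', rfl⟩ : ∃ i', i = i' + 1 := ⟨i - 1, by omega⟩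
    have h := hF1 i' (by omega) (n + 1) n
    rw [(hGB i' (by omega)).A_diag (n + 1), mul_one] at h
    rw [Nat.add_sub_cancel, h]
    ring
  · -- (b)
    intro j hj H hH
    have hG1 : ∀ i, i < r → ∀ n ℓ, bidMul (A i) (Lmat r (i + 1) α) n ℓ = A (i + 1) n ℓ := by
      intro i hi n ℓ
      rw [bidMul_L (fun n ℓ h => (hGB i (by omega)).A_upper n ℓ (by omega)) n ℓ]
      exact (hF1 i hi n ℓ).symm
    have hG2 : ∀ n ℓ, bidMul (A r) (Umat r α) n ℓ = A 0 (n + 1) ℓ := by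
      intro n ℓ
      rw [bidMul_U (hGB r le_rfl).A_upper n ℓ]
      exact (hF2 n ℓ).symm
    have hG3 : ∀ i, i < r → ∀ n ℓ,
        bidMul (fun n ℓ => A i (n + 1) ℓ) (Lmat r (i + 1) α) n ℓ = A (i + 1) (n + 1) ℓ := by
      intro i hi n ℓ
      rw [bidMul_L (fun n ℓ h => (hGB i (by omega)).A_upper (n + 1) ℓ (by omega)) n ℓ]
      exact (hF1 i hi (n + 1) ℓ).symm
    have hchainT : ∀ m i, i + m = r → ∀ (tail : List (ℕ → ℕ → ℂ)) n ℓ,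
        bidMul (A i)
          (listProd (((List.range' (i + 1) m).map fun k => Lmat r k α) ++ tail)) n ℓ
          = bidMul (A r) (listProd tail) n ℓ := by
      intro m
      induction m with
      | zero =>
        intro i hi tail n ℓ
        obtain rfl : i = r := by omega
        rfl
      | succ m ih =>
        intro i hi tail n ℓ
        rw [List.range'_succ, List.map_cons, List.cons_append]
        show bidMul (A i) (bidMul (Lmat r (i + 1) α)
          (listProd (((List.range' (i + 1 + 1) m).map fun k => Lmat r k α) ++ tail))) n ℓ = _
        rw [bid_assoc (fun n ℓ h => Lmat_supp r (i + 1) α (by omega))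
          (fun n => by rw [(hGB i (by omega)).A_upper n (n + 1) (by omega), zero_mul]),
          bidMul_row_congr (X' := A (i + 1)) (fun k => hG1 i (by omega) n k)]
        exact ih (i + 1) (by omega) tail n ℓ
    have hchainH : ∀ m i, i + m ≤ r → ∀ n ℓ,
        bidMul (fun n ℓ => A i (n + 1) ℓ)
          (listProd ((List.range' (i + 1) m).map fun k => Lmat r k α)) n ℓ
          = A (i + m) (n + 1) ℓ := by
      intro m
      induction m with
      | zero =>
        intro i hi n ℓ
        exact listProd_nil (X := fun n ℓ => A i (n + 1) ℓ)
          (fun n ℓ h => (hGB i (by omega)).A_upper (n + 1) ℓ (by omega)) n ℓ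
      | succ m ih =>
        intro i hi n ℓ
        rw [List.range'_succ, List.map_cons]
        show bidMul (fun n ℓ => A i (n + 1) ℓ) (bidMul (Lmat r (i + 1) α)
          (listProd ((List.range' (i + 1 + 1) m).map fun k => Lmat r k α))) n ℓ = _
        rw [bid_assoc (fun n ℓ h => Lmat_supp r (i + 1) α (by omega))
          (fun n => by rw [Lmat_supp r (i + 1) α (show n + 1 < n + 2 by omega), mul_zero]),
          bidMul_row_congr (X' := fun n ℓ => A (i + 1) (n + 1) ℓ)
            (fun k => hG3 i (by omega) n k),
          show i + (m + 1) = (i + 1) + m by omega]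
        exact ih (i + 1) (by omega) n ℓ
    have hmain : ∀ n ℓ, bidMul (A j) (listProd (factorList r j α)) n ℓ = A j (n + 1) ℓ := by
      intro n ℓ
      unfold factorList
      rw [List.append_assoc,
        hchainT (r - j) j (by omega) ([Umat r α]
          ++ ((List.range' 1 j).map fun k => Lmat r k α)) n ℓ]
      show bidMul (A r) (bidMul (Umat r α)
        (listProd ((List.range' 1 j).map fun k => Lmat r k α))) n ℓ = _
      rw [bid_assoc (fun n ℓ h => Umat_supp r α h)
        (fun n => by rw [(hGB r le_rfl).A_upper n (n + 1) (by omega), zero_mul]),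
        bidMul_row_congr (X' := fun n ℓ => A 0 (n + 1) ℓ) (fun k => hG2 n k)]
      simpa using hchainH j 0 (by omega) n ℓ
    have hPmain : ∀ n ℓ,
        ∑ k ∈ Finset.range (n + 1), A j n k * listProd (factorList r j α) k ℓ
          = A j (n + 1) ℓ := by
      intro n ℓ
      rw [← hmain n ℓ]
      show _ = ∑ k ∈ Finset.range (n + 1 + 1), A j n k * listProd (factorList r j α) k ℓ
      conv_rhs => rw [Finset.sum_range_succ]
      rw [(hGB j hj).A_upper n (n + 1) (by omega), zero_mul, add_zero]
    exact cancel (hGB j hj).A_diag (fun n ℓ => by rw [hH n ℓ, hPmain n ℓ])
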